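/- Let ω be a nonnegative increasing function such that ω(t) ≤ (ln(t/4))^{−2} for 0 < t ≤ 1, and for fixed κ ∈ (0,1) and γ ∈ (0,1) define ω̃(t) := Σ_{i=1}^∞ κ^{iγ} ( ω(κ^{−i}t)·1_{κ^{−i}t ≤ 1} + ω(1)·1_{κ^{−i}t > 1} ). Then for any r ∈ (0,1], ∫₀^r ω̃(t)/t dt ≤ N (ln(4/r))^{−1}, where N > 0 is a constant (depending on κ and γ). -/

import Mathlib

open MeasureTheory Set
open scoped ENNReal Topology
noncomputable section

lemma exp_neg_le_aux (y : ℝ) (hy : 0 < y) : Real.exp (-y) ≤ 4 / y ^ 2 := by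
  have h1 : y / 2 ≤ Real.exp (y / 2) := by
    have := Real.add_one_le_exp (y / 2); linarith
  have h2 : y ^ 2 / 4 ≤ Real.exp y := by
    have hE : Real.exp y = Real.exp (y/2) * Real.exp (y/2) := by
      rw [← Real.exp_add]; ring_nf
    nlinarith [Real.exp_pos (y/2)]
  rw [Real.exp_neg]
  calc (Real.exp y)⁻¹ ≤ (y^2/4)⁻¹ := by
        apply inv_anti₀ (by positivity) h2
    _ = 4 / y^2 := by field_simp
lemma intI_aux (r : ℝ) (hr0 : 0 < r) (hr1 : r ≤ 1) :
    ∫⁻ t in Ioo (0:ℝ) r, ENNReal.ofReal (((Real.log (t / 4)) ^ 2)⁻¹ / t)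
      ≤ ENNReal.ofReal ((Real.log (4 / r))⁻¹) := by
  set h : ℝ → ℝ := fun t => ((Real.log (t / 4)) ^ 2)⁻¹ / t with hh
  set F : ℝ → ℝ := fun t => -(Real.log (t / 4))⁻¹ with hF
  have hFr : F r = (Real.log (4 / r))⁻¹ := by
    have h4r : (4:ℝ)/r = (r/4)⁻¹ := by field_simp
    show -(Real.log (r / 4))⁻¹ = _
    rw [h4r, Real.log_inv, inv_neg]
  have key : ∀ a : ℝ, 0 < a → a < r →
      ∫⁻ t in Ioo a r, ENNReal.ofReal (h t) ≤ ENNReal.ofReal ((Real.log (4 / r))⁻¹) := by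
    intro a ha har
    have hlogne : ∀ t : ℝ, t ∈ Icc a r → Real.log (t/4) ≠ 0 := by
      intro t ht
      have ht0 : 0 < t := lt_of_lt_of_le ha ht.1
      have : t/4 < 1 := by nlinarith [ht.2]
      exact ne_of_lt (Real.log_neg (by positivity) this)
    have hcont : ContinuousOn h (Icc a r) := by
      intro t ht
      have ht0 : 0 < t := lt_of_lt_of_le ha ht.1
      have hlog : ContinuousAt (fun t : ℝ => Real.log (t/4)) t :=
        (Real.continuousAt_log (by positivity)).comp (continuousAt_id.div_const 4)
      exact (((hlog.pow 2).inv₀ (pow_ne_zero 2 (hlogne t ht))).div continuousAt_id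
        (ne_of_gt ht0)).continuousWithinAt
    have hint : IntegrableOn h (Ioo a r) := (hcont.integrableOn_Icc).mono_set Ioo_subset_Icc_self
    have hnn : ∀ t ∈ Ioo a r, 0 ≤ h t := by
      intro t ht
      have ht0 : 0 < t := lt_trans ha ht.1
      exact div_nonneg (inv_nonneg.2 (sq_nonneg _)) ht0.le
    rw [← ofReal_integral_eq_lintegral_ofReal hint
      ((ae_restrict_iff' measurableSet_Ioo).2 (ae_of_all _ hnn))]
    apply ENNReal.ofReal_le_ofReal
    have hderiv : ∀ t ∈ Icc a r, HasDerivAt F (h t) t := by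
      intro t ht
      have ht0 : 0 < t := lt_of_lt_of_le ha ht.1
      have hlogd : HasDerivAt (fun t : ℝ => Real.log (t/4)) (1/t) t := by
        have := (Real.hasDerivAt_log (ne_of_gt (show (0:ℝ) < t/4 by positivity))).comp t
          ((hasDerivAt_id t).div_const 4)
        exact this.congr_deriv (by field_simp)
      have := (hlogd.inv (hlogne t ht)).neg
      refine this.congr_deriv ?_
      rw [hh]
      field_simp
    have hii : IntervalIntegrable h volume a r := by
      apply ContinuousOn.intervalIntegrable
      rwa [uIcc_of_le har.le]
    have hftc : ∫ t in a..r, h t = F r - F a := by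
      apply intervalIntegral.integral_eq_sub_of_hasDerivAt _ hii
      intro t ht
      exact hderiv t (by rwa [uIcc_of_le har.le] at ht)
    have hEq : ∫ t in Ioo a r, h t = ∫ t in a..r, h t := by
      rw [intervalIntegral.integral_of_le har.le, integral_Ioc_eq_integral_Ioo]
    have hFa : 0 ≤ F a := by
      have : Real.log (a/4) < 0 := Real.log_neg (by positivity) (by nlinarith)
      have h2 : (Real.log (a/4))⁻¹ < 0 := inv_lt_zero.mpr this
      show (0:ℝ) ≤ -(Real.log (a / 4))⁻¹
      linarith
    rw [hEq, hftc, ← hFr]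
    linarith
  -- monotone convergence
  set g : ℝ → ℝ≥0∞ := fun t => ENNReal.ofReal (h t) with hg
  have hgm : Measurable g := by
    apply ENNReal.measurable_ofReal.comp
    apply Measurable.div
    · exact ((Real.measurable_log.comp (measurable_id.div_const 4)).pow_const 2).inv
    · exact measurable_id
  have hEq2 : ∫⁻ t in Ioo (0:ℝ) r, g t = ⨆ n : ℕ, ∫⁻ t in Ioo (r/(n+2)) r, g t := by
    have hind : ∀ n : ℕ, ∫⁻ t in Ioo (r/(n+2)) r, g t
        = ∫⁻ t, (Ioo (r/(n+2:ℝ)) r).indicator g t := by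
      intro n; rw [lintegral_indicator measurableSet_Ioo]
    have hsup : (Ioo (0:ℝ) r).indicator g = fun t => ⨆ n : ℕ, (Ioo (r/(n+2:ℝ)) r).indicator g t := by
      funext t
      by_cases ht : t ∈ Ioo (0:ℝ) r
      · rw [indicator_of_mem ht]
        apply le_antisymm
        · obtain ⟨n, hn⟩ := exists_nat_gt (r / t)
          have hlt : r / ((n:ℝ)+2) < t := by
            rw [div_lt_iff₀ (by positivity)]
            have h2 : r < (n:ℝ) * t := (div_lt_iff₀ ht.1).1 hn
            nlinarith [ht.1]
          refine le_trans ?_ (le_iSup _ n)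
          rw [indicator_of_mem (Set.mem_Ioo.mpr ⟨hlt, ht.2⟩)]
        · exact iSup_le fun n => indicator_le_self _ _ t
      · rw [indicator_of_notMem ht]
        refine le_antisymm zero_le (iSup_le fun n => ?_)
        rw [indicator_of_notMem]
        intro hmem
        rw [Set.mem_Ioo] at hmem
        exact ht (Set.mem_Ioo.mpr ⟨lt_trans (by positivity) hmem.1, hmem.2⟩)
    have hmono : Monotone (fun n : ℕ => (Ioo (r/(n+2:ℝ)) r).indicator g) := by
      intro m n hmn
      apply indicator_le_indicator_of_subset
      · apply Ioo_subset_Ioo_left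
        apply div_le_div_of_nonneg_left hr0.le (by positivity)
        have : ((m:ℝ)) ≤ (n:ℝ) := Nat.cast_le.mpr hmn
        linarith
      · exact fun _ => zero_le
    rw [← lintegral_indicator measurableSet_Ioo, hsup,
      lintegral_iSup (fun n => hgm.indicator measurableSet_Ioo) hmono]
    simp_rw [hind]
  rw [hEq2]
  apply iSup_le
  intro n
  refine key _ (by positivity) (div_lt_self hr0 ?_)
  have : (0:ℝ) ≤ (n:ℝ) := Nat.cast_nonneg n
  linarith

set_option maxHeartbeats 2000000 in
lemma term_bound (κ γ : ℝ) (hκ0 : 0 < κ) (hκ1 : κ < 1) (hγ0 : 0 < γ) (hγ1 : γ < 1)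
    (ω : ℝ → ℝ) (hω0 : ∀ t ∈ Set.Ioc (0 : ℝ) 1, 0 ≤ ω t)
    (hωle : ∀ t ∈ Set.Ioc (0 : ℝ) 1, ω t ≤ ((Real.log (t / 4)) ^ 2)⁻¹)
    (t : ℝ) (ht0 : 0 < t) (ht1 : t ≤ 1) (i : ℕ) :
    (κ ^ (i + 1)) ^ γ * (if t / κ ^ (i + 1) ≤ 1 then ω (t / κ ^ (i + 1)) else ω 1)
      ≤ (κ ^ ((γ:ℝ)/2)) ^ (i+1) *
        ((4 + 64 * ((Real.log 4)^2)⁻¹ / γ^2) / (Real.log (4/t))^2) := by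
  have hlogκ : Real.log κ < 0 := Real.log_neg hκ0 hκ1
  have hlog4 : 1 < Real.log 4 := by
    rw [Real.lt_log_iff_exp_lt (by norm_num)]
    calc Real.exp 1 < 2.7182818286 := Real.exp_one_lt_d9
      _ < 4 := by norm_num
  set L := Real.log (4/t) with hLdef
  have hLt : L = Real.log 4 - Real.log t := by
    rw [hLdef, Real.log_div (by norm_num) (ne_of_gt ht0)]
  have hL4 : Real.log 4 ≤ L := by
    rw [hLt]
    have : Real.log t ≤ 0 := Real.log_nonpos ht0.le ht1
    linarith
  have hL1 : 1 < L := lt_of_lt_of_le hlog4 hL4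
  have hL20 : (0:ℝ) < L^2 := by positivity
  set c : ℝ := κ ^ (i+1) with hcdef
  have hc0 : 0 < c := pow_pos hκ0 _
  have hc1 : c ≤ 1 := pow_le_one₀ hκ0.le hκ1.le
  set s : ℝ := t / c with hsdef
  have hs0 : 0 < s := div_pos ht0 hc0
  set x : ℝ := ((i:ℝ)+1) * (-Real.log κ) with hxdef
  have hx0 : 0 < x := mul_pos (by positivity) (by linarith)
  have hlogc' : Real.log c = -x := by
    rw [hcdef, Real.log_pow, hxdef]; push_cast; ring
  have hch : c ^ ((γ:ℝ)/2) = Real.exp (-(x * (γ/2))) := by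
    rw [Real.rpow_def_of_pos hc0, hlogc']; ring_nf
  have hq_eq : c ^ ((γ:ℝ)/2) = (κ ^ ((γ:ℝ)/2))^(i+1) := by
    rw [hch, Real.rpow_def_of_pos hκ0, ← Real.exp_nat_mul]
    congr 1
    rw [hxdef]; push_cast; ring
  have hcgsplit : c ^ γ = c ^ ((γ:ℝ)/2) * c ^ ((γ:ℝ)/2) := by
    rw [← Real.rpow_add hc0]; congr 1; ring
  set D : ℝ := ((Real.log 4)^2)⁻¹ with hDdef
  set C2 : ℝ := 4 + 64 * D / γ^2 with hC2def
  have hD0 : 0 < D := by rw [hDdef]; positivity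
  set w : ℝ := if s ≤ 1 then ω s else ω 1 with hwdef
  have hw0 : 0 ≤ w := by
    rw [hwdef]; split_ifs with hs
    · exact hω0 s ⟨hs0, hs⟩
    · exact hω0 1 ⟨one_pos, le_refl 1⟩
  have hwD : w ≤ D := by
    rw [hwdef]; split_ifs with hs
    · refine le_trans (hωle s ⟨hs0, hs⟩) ?_
      have hlogs : Real.log (s/4) ≤ -Real.log 4 := by
        calc Real.log (s/4) ≤ Real.log (4:ℝ)⁻¹ := by
              apply Real.log_le_log (by positivity)
              rw [div_le_iff₀ (by norm_num : (0:ℝ) < 4), inv_mul_eq_div]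
              linarith
          _ = -Real.log 4 := Real.log_inv 4
      rw [hDdef]
      apply inv_anti₀ (by positivity) (by nlinarith)
    · refine le_trans (hωle 1 ⟨one_pos, le_refl 1⟩) ?_
      rw [hDdef, show (1:ℝ)/4 = (4:ℝ)⁻¹ by norm_num, Real.log_inv, neg_sq]
  show c ^ γ * w ≤ (κ ^ ((γ:ℝ)/2))^(i+1) * (C2 / L^2)
  by_cases hx : x ≤ L/2
  · -- case A
    have hwA : w ≤ 4 / L^2 := by
      rw [hwdef]; split_ifs with hs
      · have hlogs : Real.log (s/4) = x - L := by
          rw [hsdef, show t / c / 4 = (t/4)/c by ring,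
            Real.log_div (by positivity : t/4 ≠ 0) (ne_of_gt hc0),
            Real.log_div (ne_of_gt ht0) (by norm_num : (4:ℝ) ≠ 0), hlogc', hLt]
          ring
        have hsq : L^2/4 ≤ (Real.log (s/4))^2 := by rw [hlogs]; nlinarith
        refine le_trans (hωle s ⟨hs0, hs⟩) ?_
        calc ((Real.log (s/4))^2)⁻¹ ≤ (L^2/4)⁻¹ := inv_anti₀ (by positivity) hsq
          _ = 4/L^2 := by rw [inv_div]
      · push_neg at hs
        have hlogs_pos : 0 < Real.log s := Real.log_pos hs
        have hlogseq : Real.log s = Real.log t + x := by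
          rw [hsdef, Real.log_div (ne_of_gt ht0) (ne_of_gt hc0), hlogc']; ring
        have hL2b : L < 2 * Real.log 4 := by
          have h0 : Real.log t + x > 0 := by rw [← hlogseq]; exact hlogs_pos
          have h1 : L < x + Real.log 4 := by rw [hLt]; linarith
          linarith
        refine le_trans (hωle 1 ⟨one_pos, le_refl 1⟩) ?_
        rw [show (1:ℝ)/4 = (4:ℝ)⁻¹ by norm_num, Real.log_inv, neg_sq]
        calc ((Real.log 4)^2)⁻¹ ≤ (L^2/4)⁻¹ := by
              apply inv_anti₀ (by positivity)
              nlinarith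
          _ = 4/L^2 := by rw [inv_div]
    have hcexp : c ^ γ ≤ c ^ ((γ:ℝ)/2) :=
      Real.rpow_le_rpow_of_exponent_ge hc0 hc1 (by linarith)
    calc c^γ * w ≤ c^((γ:ℝ)/2) * (4/L^2) :=
          mul_le_mul hcexp hwA hw0 (Real.rpow_nonneg hc0.le _)
      _ = (κ ^ ((γ:ℝ)/2))^(i+1) * (4/L^2) := by rw [hq_eq]
      _ ≤ (κ ^ ((γ:ℝ)/2))^(i+1) * (C2/L^2) := by
          apply mul_le_mul_of_nonneg_left _ (pow_nonneg (Real.rpow_nonneg hκ0.le _) _)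
          apply div_le_div_of_nonneg_right ?_ hL20.le
          rw [hC2def]
          have : 0 ≤ 64*D/γ^2 := by positivity
          linarith
  · -- case B
    push_neg at hx
    have hexp : c ^ ((γ:ℝ)/2) ≤ 64 / (γ^2 * L^2) := by
      rw [hch]
      calc Real.exp (-(x * (γ/2))) ≤ Real.exp (-(γ * L / 4)) := by
            apply Real.exp_le_exp.mpr
            nlinarith
        _ ≤ 4 / (γ * L / 4)^2 := exp_neg_le_aux _ (by positivity)
        _ = 64 / (γ^2 * L^2) := by
            have hγ' : γ ≠ 0 := ne_of_gt hγ0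
            have hL' : L ≠ 0 := by positivity
            field_simp
            ring
    calc c^γ * w = c^((γ:ℝ)/2) * (c^((γ:ℝ)/2) * w) := by rw [hcgsplit]; ring
      _ ≤ c^((γ:ℝ)/2) * ((64/(γ^2*L^2)) * D) := by
          apply mul_le_mul_of_nonneg_left _ (Real.rpow_nonneg hc0.le _)
          exact mul_le_mul hexp hwD hw0 (by positivity)
      _ = (κ ^ ((γ:ℝ)/2))^(i+1) * ((64*D/γ^2)/L^2) := by
          rw [hq_eq]; congr 1
          have hγ' : γ ≠ 0 := ne_of_gt hγ0
          have hL' : L ≠ 0 := by positivity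
          field_simp
      _ ≤ (κ ^ ((γ:ℝ)/2))^(i+1) * (C2/L^2) := by
          apply mul_le_mul_of_nonneg_left _ (pow_nonneg (Real.rpow_nonneg hκ0.le _) _)
          apply div_le_div_of_nonneg_right ?_ hL20.le
          rw [hC2def]; linarith


set_option maxHeartbeats 1000000 in
theorem stmt_17
    (κ γ : ℝ) (hκ : κ ∈ Set.Ioo (0 : ℝ) 1) (hγ : γ ∈ Set.Ioo (0 : ℝ) 1) :
    ∃ N : ℝ, 0 < N ∧
      ∀ ω : ℝ → ℝ,
        (∀ t ∈ Set.Ioc (0 : ℝ) 1, 0 ≤ ω t) →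
        MonotoneOn ω (Set.Ioc (0 : ℝ) 1) →
        (∀ t ∈ Set.Ioc (0 : ℝ) 1, ω t ≤ ((Real.log (t / 4)) ^ 2)⁻¹) →
        ∀ r ∈ Set.Ioc (0 : ℝ) 1,
          (∫⁻ t in Set.Ioo (0 : ℝ) r,
              ENNReal.ofReal
                ((∑' i : ℕ, (κ ^ (i + 1)) ^ γ *
                    (if t / κ ^ (i + 1) ≤ 1 then ω (t / κ ^ (i + 1)) else ω 1)) / t))
            ≤ ENNReal.ofReal (N * (Real.log (4 / r))⁻¹) := by
  obtain ⟨hκ0, hκ1⟩ := hκ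
  obtain ⟨hγ0, hγ1⟩ := hγ
  set q : ℝ := κ ^ ((γ:ℝ)/2) with hqdef
  have hq0 : 0 < q := Real.rpow_pos_of_pos hκ0 _
  have hq1 : q < 1 := Real.rpow_lt_one hκ0.le hκ1 (by positivity)
  have hlog4 : 1 < Real.log 4 := by
    rw [Real.lt_log_iff_exp_lt (by norm_num)]
    calc Real.exp 1 < 2.7182818286 := Real.exp_one_lt_d9
      _ < 4 := by norm_num
  set C2 : ℝ := 4 + 64 * ((Real.log 4)^2)⁻¹ / γ^2 with hC2def
  have hC20 : 0 < C2 := by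
    have h0 : 0 < ((Real.log 4)^2)⁻¹ := by positivity
    have : 0 ≤ 64 * ((Real.log 4)^2)⁻¹ / γ^2 := by positivity
    rw [hC2def]; linarith
  set N : ℝ := C2 * (1 - q)⁻¹ with hNdef
  have hN0 : 0 < N := by
    have h1q : 0 < 1 - q := by linarith
    rw [hNdef]; positivity
  refine ⟨N, hN0, ?_⟩
  intro ω hω0 hmono hωle r hr
  obtain ⟨hr0, hr1⟩ := hr
  have hpt : ∀ t ∈ Ioo (0:ℝ) r,
      (∑' i : ℕ, (κ ^ (i + 1)) ^ γ *
          (if t / κ ^ (i + 1) ≤ 1 then ω (t / κ ^ (i + 1)) else ω 1)) / t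
        ≤ N * (((Real.log (t/4))^2)⁻¹ / t) := by
    intro t ht
    obtain ⟨ht0, htr⟩ := ht
    have ht1 : t ≤ 1 := le_of_lt (lt_of_lt_of_le htr hr1)
    set L := Real.log (4/t) with hLdef
    have hLt : L = Real.log 4 - Real.log t := by
      rw [hLdef, Real.log_div (by norm_num) (ne_of_gt ht0)]
    have hlogt4 : Real.log (t/4) = -L := by
      rw [hLt, Real.log_div (ne_of_gt ht0) (by norm_num)]; ring
    have hL4 : Real.log 4 ≤ L := by
      rw [hLt]
      have : Real.log t ≤ 0 := Real.log_nonpos ht0.le ht1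
      linarith
    have hL1 : 1 < L := lt_of_lt_of_le hlog4 hL4
    have hL20 : (0:ℝ) < L^2 := by positivity
    set f : ℕ → ℝ := fun i => (κ ^ (i + 1)) ^ γ *
          (if t / κ ^ (i + 1) ≤ 1 then ω (t / κ ^ (i + 1)) else ω 1) with hfdef
    have hterm : ∀ i : ℕ, f i ≤ q^(i+1) * (C2 / L^2) := fun i =>
      term_bound κ γ hκ0 hκ1 hγ0 hγ1 ω hω0 hωle t ht0 ht1 i
    have hf0 : ∀ i, 0 ≤ f i := by
      intro i
      apply mul_nonneg (Real.rpow_nonneg (pow_nonneg hκ0.le _) _)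
      split_ifs with hs
      · exact hω0 _ ⟨div_pos ht0 (pow_pos hκ0 _), hs⟩
      · exact hω0 1 ⟨one_pos, le_refl 1⟩
    have hsumgeo : Summable (fun i : ℕ => q^i) := summable_geometric_of_lt_one hq0.le hq1
    have hsumq : Summable (fun i : ℕ => q^(i+1)) := by
      have := hsumgeo.mul_right q
      simpa [pow_succ] using this
    have hsumb : Summable (fun i : ℕ => q^(i+1) * (C2/L^2)) := hsumq.mul_right _
    have hsumf : Summable f := Summable.of_nonneg_of_le hf0 hterm hsumb
    have h1 : ∑' i, f i ≤ ∑' i : ℕ, q^(i+1) * (C2/L^2) := Summable.tsum_le_tsum hterm hsumf hsumb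
    have h2 : (∑' i : ℕ, q^(i+1) * (C2/L^2)) ≤ (1-q)⁻¹ * (C2/L^2) := by
      rw [tsum_mul_right]
      apply mul_le_mul_of_nonneg_right _ (by positivity)
      calc (∑' i:ℕ, q^(i+1)) ≤ ∑' i:ℕ, q^i :=
            Summable.tsum_le_tsum (fun i => pow_le_pow_of_le_one hq0.le hq1.le (Nat.le_succ i))
              hsumq hsumgeo
        _ = (1-q)⁻¹ := tsum_geometric_of_lt_one hq0.le hq1
    rw [hlogt4, neg_sq]
    rw [show N * ((L^2)⁻¹ / t) = (N * (L^2)⁻¹) / t by ring]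
    have hend : (∑' i, f i) ≤ N * (L^2)⁻¹ := by
      refine le_trans h1 (le_trans h2 (le_of_eq ?_))
      rw [hNdef]; field_simp
    gcongr
  calc (∫⁻ t in Set.Ioo (0 : ℝ) r,
          ENNReal.ofReal
            ((∑' i : ℕ, (κ ^ (i + 1)) ^ γ *
                (if t / κ ^ (i + 1) ≤ 1 then ω (t / κ ^ (i + 1)) else ω 1)) / t))
      ≤ ∫⁻ t in Ioo (0:ℝ) r, ENNReal.ofReal (N * (((Real.log (t/4))^2)⁻¹ / t)) := by
        apply lintegral_mono_ae
        rw [ae_restrict_iff' measurableSet_Ioo]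
        exact ae_of_all _ fun t ht => ENNReal.ofReal_le_ofReal (hpt t ht)
    _ = ENNReal.ofReal N * ∫⁻ t in Ioo (0:ℝ) r, ENNReal.ofReal (((Real.log (t/4))^2)⁻¹ / t) := by
        simp_rw [ENNReal.ofReal_mul hN0.le]
        exact lintegral_const_mul' _ _ ENNReal.ofReal_ne_top
    _ ≤ ENNReal.ofReal N * ENNReal.ofReal ((Real.log (4/r))⁻¹) :=
        mul_le_mul_right (intI_aux r hr0 hr1) _
    _ = ENNReal.ofReal (N * (Real.log (4/r))⁻¹) := (ENNReal.ofReal_mul hN0.le).symm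

end
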